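/- arXiv:2006.03399 — 2 statements merged into one kernel-verified Lean document; each statement's English description precedes it below -/
import Mathlib

section
/- Five-block structure for weighted number of tardy jobs: for every feasible instance of 1|er|Σw_jU_j (jobs in EDD order) there exist disjoint sets X*, Y*, Z* ⊆ J such that the sequence σ_{X*,Y*,Z*} (blocks X*, Y*, J^r \ Y*, Z*, remaining jobs, each in EDD order) is feasible and optimal, all jobs in X* ∪ Y* ∪ Z* are non-tardy in σ_{X*,Y*,Z*}, (X* ∪ Z*) ∩ J^r = ∅, and max(X* ∪ (Y* ∩ J^o)) < min Z*. -/
variable {n : ℕ}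

/-- completion time of job `j` in the schedule given by the list `l`:
total processing time of the prefix of `l` up to and including `j`. -/
def comp (p : Fin n → ℕ) (l : List (Fin n)) (j : Fin n) : ℕ :=
  ((l.takeWhile fun k => decide (k ≠ j)).map p).sum + p j

/-- the elements of a finset listed in increasing index order. -/
def sortF (s : Finset (Fin n)) : List (Fin n) := s.sort (· ≤ ·)

/-- a schedule is a permutation of all of the jobs. -/
def IsSchedule (l : List (Fin n)) : Prop := l.Perm (List.finRange n)

/-- the renting period of schedule `l`: from the start of the first r-job to
the completion of the last r-job. -/
def rent (p : Fin n → ℕ) (Jr : Finset (Fin n)) (hJr : Jr.Nonempty)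
    (l : List (Fin n)) : ℤ :=
  (Jr.sup' hJr fun j => (comp p l j : ℤ)) -
    (Jr.inf' hJr fun j => (comp p l j : ℤ) - p j)

/-- `H`: the o-jobs with index between `α = min J^r` and `β = max J^r`. -/
def Hset (Jr : Finset (Fin n)) (hJr : Jr.Nonempty) : Finset (Fin n) :=
  (Finset.Icc (Jr.min' hJr) (Jr.max' hJr)) \ Jr

/-- the five-block sequence `σ_{X,Y}`: blocks `J[1,α-1]`, `X`,
`J[α,β] \ (X ∪ Y)`, `Y`, `J[β+1,n]`, each internally in increasing index
(WSPT resp. EDD) order. -/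
def fiveBlock (Jr : Finset (Fin n)) (hJr : Jr.Nonempty)
    (X Y : Finset (Fin n)) : List (Fin n) :=
  sortF (Finset.Iio (Jr.min' hJr)) ++ sortF X ++
    sortF ((Finset.Icc (Jr.min' hJr) (Jr.max' hJr)) \ (X ∪ Y)) ++
    sortF Y ++ sortF (Finset.Ioi (Jr.max' hJr))

/-- the five-block sequence `σ_{X,Y,Z}` for the weighted-number-of-tardy-jobs
problem: blocks `X`, `Y`, `J^r \ Y`, `Z`, remaining jobs, each internally in
EDD (increasing index) order. -/
def fiveBlockU (Jr X Y Z : Finset (Fin n)) : List (Fin n) :=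
  sortF X ++ sortF Y ++ sortF (Jr \ Y) ++ sortF Z ++
    sortF (Finset.univ \ (X ∪ Y ∪ Jr ∪ Z))

/-- weighted number of tardy jobs of schedule `l`. -/
def WNT (p w d : Fin n → ℕ) (l : List (Fin n)) : ℕ :=
  ∑ j : Fin n, w j * (if d j < comp p l j then 1 else 0)

lemma takeWhile_append_ne (j : Fin n) (L l' : List (Fin n)) (h : j ∉ L) :
    ((L ++ l').takeWhile fun k => decide (k ≠ j)) =
      L ++ (l'.takeWhile fun k => decide (k ≠ j)) := by
  induction L with
  | nil => simp
  | cons a L ih =>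
    simp only [List.mem_cons, not_or] at h
    rw [List.cons_append, List.takeWhile_cons_of_pos (by simp [Ne.symm h.1]),
      ih h.2, List.cons_append]
lemma comp_append (p : Fin n → ℕ) (j : Fin n) (L l' : List (Fin n)) (h : j ∉ L) :
    comp p (L ++ l') j = (L.map p).sum + comp p l' j := by
  unfold comp
  rw [takeWhile_append_ne j L l' h, List.map_append, List.sum_append, Nat.add_assoc]
lemma comp_cons_self (p : Fin n → ℕ) (j : Fin n) (l' : List (Fin n)) :
    comp p (j :: l') j = p j := by
  unfold comp
  rw [List.takeWhile_cons_of_neg (by simp)]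
  simp
lemma comp_split (p : Fin n → ℕ) (j : Fin n) (L l' : List (Fin n)) (h : j ∉ L) :
    comp p (L ++ j :: l') j = (L.map p).sum + p j := by
  rw [comp_append p j L _ h, comp_cons_self]

lemma exists_first_split {l : List (Fin n)} {j : Fin n} (hl : l.Nodup) (hj : j ∈ l) :
    ∃ L₁ L₂, l = L₁ ++ j :: L₂ ∧ j ∉ L₁ := by
  obtain ⟨L₁, L₂, rfl⟩ := List.append_of_mem hj
  refine ⟨L₁, L₂, rfl, ?_⟩
  have := List.disjoint_of_nodup_append hl
  exact fun h => this h (List.mem_cons_self)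

lemma comp_lt_left (p : Fin n → ℕ) (hp : ∀ j, 0 < p j) {L₁ L₂ : List (Fin n)} {i j : Fin n}
    (hl : (L₁ ++ j :: L₂).Nodup) (hi : i ∈ L₁) :
    comp p (L₁ ++ j :: L₂) i < comp p (L₁ ++ j :: L₂) j := by
  have hnd1 : L₁.Nodup := (List.nodup_append.1 hl).1
  obtain ⟨a, b, rfl, hia⟩ := exists_first_split hnd1 hi
  have hj : j ∉ a ++ i :: b := by
    intro hmem
    exact (List.disjoint_of_nodup_append hl) hmem (List.mem_cons_self)
  have e1 : comp p (a ++ i :: b ++ j :: L₂) i = (a.map p).sum + p i := by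
    have : a ++ i :: b ++ j :: L₂ = a ++ i :: (b ++ j :: L₂) := by simp
    rw [this, comp_split p i a _ hia]
  have e2 : comp p (a ++ i :: b ++ j :: L₂) j = ((a ++ i :: b).map p).sum + p j :=
    comp_split p j _ _ hj
  rw [e1, e2]
  have := hp j
  simp [List.map_append, List.sum_append]
  omega

lemma comp_lt_right (p : Fin n → ℕ) (hp : ∀ j, 0 < p j) {L₁ L₂ : List (Fin n)} {i j : Fin n}
    (hl : (L₁ ++ j :: L₂).Nodup) (hi : i ∈ L₂) :
    comp p (L₁ ++ j :: L₂) j < comp p (L₁ ++ j :: L₂) i := by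
  have hjL : j ∉ L₁ := fun h => (List.disjoint_of_nodup_append hl) h (List.mem_cons_self)
  have hnd2 : L₂.Nodup := (List.nodup_cons.1 (List.nodup_append.1 hl).2.1).2
  obtain ⟨a, b, rfl, hia⟩ := exists_first_split hnd2 hi
  have hiL : i ∉ L₁ ++ j :: a := by
    simp only [List.mem_append, List.mem_cons, not_or]
    refine ⟨fun h => (List.disjoint_of_nodup_append hl) h (by simp), ?_, hia⟩
    rintro rfl
    exact (List.nodup_cons.1 (List.nodup_append.1 hl).2.1).1 hi
  rw [comp_split p j _ _ hjL]
  have : L₁ ++ j :: (a ++ i :: b) = (L₁ ++ j :: a) ++ i :: b := by simp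
  rw [this, comp_split p i _ _ hiL]
  have := hp i
  simp [List.map_append, List.sum_append]
  omega

/-- Key witness lemma: sum over `T` bounded by completion of a job `j'`
that completes no earlier than every member of `T`. -/
lemma sum_le_comp (p : Fin n → ℕ) (hp : ∀ j, 0 < p j) {l : List (Fin n)} (hl : l.Nodup)
    (T : Finset (Fin n)) (hmem : ∀ i ∈ T, i ∈ l) {j' : Fin n} (hj' : j' ∈ T)
    (hmax : ∀ i ∈ T, comp p l i ≤ comp p l j') :
    ∑ i ∈ T, p i ≤ comp p l j' := by
  obtain ⟨L₁, L₂, hdec, hjL⟩ := exists_first_split hl (hmem j' hj')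
  subst hdec
  have hsub : T ⊆ (L₁ ++ [j']).toFinset := by
    intro i hi
    simp only [List.toFinset_append, Finset.mem_union, List.mem_toFinset, List.mem_singleton]
    rcases eq_or_ne i j' with rfl | hne
    · simp
    have hil : i ∈ L₁ ++ j' :: L₂ := hmem i hi
    simp only [List.mem_append, List.mem_cons] at hil
    rcases hil with h | h | h
    · simp [h]
    · exact absurd h hne
    · exact absurd (hmax i hi) (not_le.2 (comp_lt_right p hp hl h))
  have hnd : (L₁ ++ [j']).Nodup := by
    have : (L₁ ++ j' :: L₂).Sublist (L₁ ++ j' :: L₂) := List.Sublist.refl _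
    refine List.Nodup.sublist ?_ hl
    exact (List.append_sublist_append_left L₁).2 (by simp)
  calc ∑ i ∈ T, p i ≤ ∑ i ∈ (L₁ ++ [j']).toFinset, p i :=
        Finset.sum_le_sum_of_subset hsub
    _ = ((L₁ ++ [j']).map p).sum := by rw [List.sum_toFinset _ hnd]
    _ = comp p (L₁ ++ j' :: L₂) j' := by
        rw [comp_split p j' _ _ hjL]; simp [List.map_append]

/-- Segment witness lemma: if every member of `T` completes in `[comp φ, comp λ]`
then `p(T)` fits within the segment from the start of `φ` to completion of `λ`. -/
lemma sum_le_comp_sub (p : Fin n → ℕ) (hp : ∀ j, 0 < p j) {l : List (Fin n)} (hl : l.Nodup)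
    (T : Finset (Fin n)) (hmem : ∀ i ∈ T, i ∈ l) {phi lam : Fin n}
    (hphi : phi ∈ l) (hlam : lam ∈ T)
    (h1 : ∀ i ∈ T, comp p l i ≤ comp p l lam)
    (h2 : ∀ i ∈ T, comp p l phi ≤ comp p l i) :
    ∑ i ∈ T, p i + comp p l phi ≤ comp p l lam + p phi := by
  obtain ⟨L₁, L₂, hdec, hphiL⟩ := exists_first_split hl hphi
  subst hdec
  rcases eq_or_ne lam phi with rfl | hne
  · -- T ⊆ {lam}
    have hsub : T ⊆ {lam} := by
      intro i hi
      rcases eq_or_ne i lam with rfl | hne'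
      · simp
      have hil := hmem i hi
      simp only [List.mem_append, List.mem_cons] at hil
      rcases hil with h | h | h
      · exact absurd (h2 i hi) (not_le.2 (comp_lt_left p hp hl h))
      · exact absurd h hne'
      · exact absurd (h1 i hi) (not_le.2 (comp_lt_right p hp hl h))
    have : ∑ i ∈ T, p i ≤ ∑ i ∈ ({lam} : Finset (Fin n)), p i :=
      Finset.sum_le_sum_of_subset hsub
    simp only [Finset.sum_singleton] at this
    omega
  · have hlaml := hmem lam hlam
    simp only [List.mem_append, List.mem_cons] at hlaml
    rcases hlaml with h | h | h
    · exact absurd (h2 lam hlam) (not_le.2 (comp_lt_left p hp hl h))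
    · exact absurd h hne
    have hnd2 : L₂.Nodup := (List.nodup_cons.1 (List.nodup_append.1 hl).2.1).2
    obtain ⟨a, b, rfl, hlama⟩ := exists_first_split hnd2 h
    have hassoc : L₁ ++ phi :: (a ++ lam :: b) = (L₁ ++ phi :: a) ++ lam :: b := by simp
    have hsub : T ⊆ (phi :: a ++ [lam]).toFinset := by
      intro i hi
      have hil := hmem i hi
      simp only [List.mem_append, List.mem_cons] at hil
      simp only [List.toFinset_append, Finset.mem_union, List.mem_toFinset, List.mem_cons,
        List.mem_singleton]
      rcases hil with hL | hL | hL
      · exact absurd (h2 i hi) (not_le.2 (comp_lt_left p hp hl hL))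
      · tauto
      · rcases hL with hL | hL | hL
        · tauto
        · tauto
        · refine absurd (h1 i hi) (not_le.2 ?_)
          rw [hassoc] at hl ⊢
          exact comp_lt_right p hp hl hL
    have hsl : (phi :: (a ++ [lam])).Sublist (L₁ ++ phi :: (a ++ lam :: b)) := by
      refine List.Sublist.trans ?_ (List.sublist_append_right L₁ _)
      refine List.Sublist.cons₂ _ ?_
      exact List.Sublist.append_left (List.Sublist.cons₂ _ (List.nil_sublist b)) a
    have hnd : (phi :: (a ++ [lam])).Nodup := List.Nodup.sublist hsl hl
    have hsum : ∑ i ∈ T, p i ≤ p phi + (a.map p).sum + p lam := by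
      calc ∑ i ∈ T, p i ≤ ∑ i ∈ (phi :: a ++ [lam]).toFinset, p i :=
            Finset.sum_le_sum_of_subset hsub
        _ = ((phi :: (a ++ [lam])).map p).sum := by
            rw [← List.sum_toFinset _ hnd]; rfl
        _ = p phi + (a.map p).sum + p lam := by
            simp [List.map_append, List.sum_append, Nat.add_assoc]
    have e1 : comp p (L₁ ++ phi :: (a ++ lam :: b)) phi = (L₁.map p).sum + p phi :=
      comp_split p phi _ _ hphiL
    have hlamnot : lam ∉ L₁ ++ phi :: a := by
      simp only [List.mem_append, List.mem_cons, not_or]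
      refine ⟨?_, hne, hlama⟩
      intro hmemL
      exact (List.disjoint_of_nodup_append hl) hmemL (by simp)
    have e2 : comp p (L₁ ++ phi :: (a ++ lam :: b)) lam
        = ((L₁ ++ phi :: a).map p).sum + p lam := by
      rw [hassoc]; exact comp_split p lam _ _ hlamnot
    rw [e1, e2]
    simp only [List.map_append, List.sum_append, List.map_cons, List.sum_cons] at *
    omega

lemma mem_sortF {s : Finset (Fin n)} {i : Fin n} : i ∈ sortF s ↔ i ∈ s :=
  Finset.mem_sort _

lemma sortF_nodup (s : Finset (Fin n)) : (sortF s).Nodup := Finset.sort_nodup _ _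

lemma sortF_sorted (s : Finset (Fin n)) : (sortF s).Pairwise (· ≤ ·) := Finset.pairwise_sort _ _

lemma sorted_filter_split {t : List (Fin n)} {j : Fin n} (hs : t.Pairwise (· ≤ ·))
    (hnd : t.Nodup) (hj : j ∈ t) :
    t = t.filter (fun i => decide (i < j)) ++ j :: t.filter (fun i => decide (j < i)) := by
  induction t with
  | nil => cases hj
  | cons a t ih =>
    rw [List.pairwise_cons] at hs
    rw [List.nodup_cons] at hnd
    rcases eq_or_ne a j with rfl | hne
    · have h1 : ∀ x ∈ t, a < x := fun x hx =>
        lt_of_le_of_ne (hs.1 x hx) (fun h => hnd.1 (h ▸ hx))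
      have e1 : (a :: t).filter (fun i => decide (i < a)) = [] := by
        rw [List.filter_eq_nil_iff]
        intro x hx
        rcases List.mem_cons.1 hx with rfl | hx
        · simp
        · simp [not_lt_of_gt (h1 x hx), le_of_lt (h1 x hx)]
      have e2 : (a :: t).filter (fun i => decide (a < i)) = t := by
        rw [List.filter_cons_of_neg (by simp)]
        exact List.filter_eq_self.2 (fun x hx => by simp [h1 x hx])
      rw [e1, e2]; rfl
    · have hjt : j ∈ t := (List.mem_cons.1 hj).resolve_left (Ne.symm hne)
      have haj : a < j := lt_of_le_of_ne (hs.1 j hjt) hne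
      have e1 : (a :: t).filter (fun i => decide (i < j))
          = a :: t.filter (fun i => decide (i < j)) :=
        List.filter_cons_of_pos (by simp [haj])
      have e2 : (a :: t).filter (fun i => decide (j < i)) = t.filter (fun i => decide (j < i)) :=
        List.filter_cons_of_neg (by simp [not_lt_of_gt haj, le_of_lt haj])
      rw [e1, e2, List.cons_append]
      exact congrArg _ (ih hs.2 hnd.2 hjt)

lemma sortF_sum (p : Fin n → ℕ) (s : Finset (Fin n)) :
    ((sortF s).map p).sum = ∑ i ∈ s, p i := by
  rw [← List.sum_toFinset _ (sortF_nodup s)]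
  congr 1
  ext i
  simp [List.mem_toFinset, mem_sortF]

lemma sortF_filter_sum (p : Fin n → ℕ) (s : Finset (Fin n)) (j : Fin n) :
    (((sortF s).filter (fun i => decide (i < j))).map p).sum
      = ∑ i ∈ s.filter (· < j), p i := by
  rw [← List.sum_toFinset _ ((sortF_nodup s).filter _)]
  congr 1
  ext i
  simp [List.mem_toFinset, List.mem_filter, mem_sortF]

lemma comp_block (p : Fin n → ℕ) (L rest : List (Fin n)) (s : Finset (Fin n)) (j : Fin n)
    (hj : j ∈ s) (hL : j ∉ L) :
    comp p (L ++ (sortF s ++ rest)) j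
      = (L.map p).sum + (∑ i ∈ s.filter (· < j), p i) + p j := by
  have hsp := sorted_filter_split (sortF_sorted s) (sortF_nodup s) (mem_sortF.2 hj)
  set t₁ := (sortF s).filter (fun i => decide (i < j)) with ht₁
  set t₂ := (sortF s).filter (fun i => decide (j < i)) with ht₂
  have hjt₁ : j ∉ L ++ t₁ := by
    simp only [List.mem_append, not_or]
    exact ⟨hL, fun h => by simpa using (List.mem_filter.1 h).2⟩
  have : L ++ (sortF s ++ rest) = (L ++ t₁) ++ j :: (t₂ ++ rest) := by
    rw [hsp]; simp
  rw [this, comp_split p j _ _ hjt₁, List.map_append, List.sum_append, ht₁, sortF_filter_sum]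

/-- five-block structure for `1|er|Σ w_j U_j` (jobs in EDD order):
for every instance admitting a feasible sequence there are disjoint
`X*, Y*, Z*` such that `σ_{X*,Y*,Z*}` is feasible and optimal, all jobs of
`X* ∪ Y* ∪ Z*` are non-tardy in it, `(X* ∪ Z*) ∩ J^r = ∅`, and
`max (X* ∪ (Y* ∩ J^o)) < min Z*`. -/
theorem stmt14 {n : ℕ} (p w d : Fin n → ℕ) (hp : ∀ j, 0 < p j)
    (hd : Monotone d)
    (Jr : Finset (Fin n)) (hJr : Jr.Nonempty) (Kr : ℤ)
    (hfeas : ∃ l : List (Fin n), IsSchedule l ∧ rent p Jr hJr l ≤ Kr) :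
    ∃ X Y Z : Finset (Fin n),
      Disjoint X Y ∧ Disjoint X Z ∧ Disjoint Y Z ∧
      Disjoint (X ∪ Z) Jr ∧
      (∀ x ∈ X ∪ (Y \ Jr), ∀ z ∈ Z, x < z) ∧
      rent p Jr hJr (fiveBlockU Jr X Y Z) ≤ Kr ∧
      (∀ j ∈ X ∪ Y ∪ Z, comp p (fiveBlockU Jr X Y Z) j ≤ d j) ∧
      ∀ l : List (Fin n), IsSchedule l → rent p Jr hJr l ≤ Kr →
        WNT p w d (fiveBlockU Jr X Y Z) ≤ WNT p w d l := by
  classical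
  obtain ⟨l₀, hl₀s, hl₀r⟩ := hfeas
  set L : List (List (Fin n)) :=
    (List.finRange n).permutations.filter (fun l' => decide (rent p Jr hJr l' ≤ Kr)) with hL
  have hl₀L : l₀ ∈ L := by
    rw [hL, List.mem_filter]
    exact ⟨List.mem_permutations.2 hl₀s, by simpa using hl₀r⟩
  rcases hA : L.argmin (WNT p w d) with _ | l
  · exact absurd (List.argmin_eq_none.1 hA) (List.ne_nil_of_mem hl₀L)
  have hlL : l ∈ L := List.argmin_mem hA
  have hopt : ∀ l' ∈ L, WNT p w d l ≤ WNT p w d l' := fun l' h =>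
    List.le_of_mem_argmin h hA
  have hlperm : l.Perm (List.finRange n) := List.mem_permutations.1 (List.mem_filter.1 hlL).1
  have hlrent : rent p Jr hJr l ≤ Kr := by
    have := (List.mem_filter.1 hlL).2; simpa using this
  have hlnd : l.Nodup := (List.Perm.nodup_iff hlperm).2 (List.nodup_finRange n)
  have hlmem : ∀ i : Fin n, i ∈ l := fun i => (List.Perm.mem_iff hlperm).2 (List.mem_finRange i)
  obtain ⟨phi, hphiJ, hphimin⟩ := Jr.exists_min_image (comp p l) hJr
  obtain ⟨lam, hlamJ, hlammax⟩ := Jr.exists_max_image (comp p l) hJr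
  have hphilam : comp p l phi ≤ comp p l lam := hphimin lam hlamJ
  set E : Finset (Fin n) := Finset.univ.filter (fun j => comp p l j ≤ d j) with hE
  set X₀ : Finset (Fin n) := E.filter (fun j => comp p l j < comp p l phi) with hX₀
  set Y₀ : Finset (Fin n) :=
    E.filter (fun j => comp p l phi ≤ comp p l j ∧ comp p l j ≤ comp p l lam) with hY₀
  set Z₀ : Finset (Fin n) := E.filter (fun j => comp p l lam < comp p l j) with hZ₀
  set Xs : Finset (Fin n) := X₀.filter (fun x => ∀ z ∈ Z₀, x < z) with hXs
  set Ys : Finset (Fin n) := Y₀.filter (fun y => y ∈ Jr ∨ ∀ z ∈ Z₀, y < z) with hYs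
  set Dm : Finset (Fin n) := (X₀ ∪ (Y₀ \ Jr)).filter (fun x => ∃ z ∈ Z₀, z < x) with hDm
  set Zs : Finset (Fin n) := Z₀ ∪ Dm with hZs
  -- membership characterizations
  have memX₀ : ∀ {x}, x ∈ X₀ → comp p l x ≤ d x ∧ comp p l x < comp p l phi := by
    intro x hx; rw [hX₀, Finset.mem_filter, hE, Finset.mem_filter] at hx; exact ⟨hx.1.2, hx.2⟩
  have memY₀ : ∀ {x}, x ∈ Y₀ →
      comp p l x ≤ d x ∧ comp p l phi ≤ comp p l x ∧ comp p l x ≤ comp p l lam := by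
    intro x hx; rw [hY₀, Finset.mem_filter, hE, Finset.mem_filter] at hx
    exact ⟨hx.1.2, hx.2.1, hx.2.2⟩
  have memZ₀ : ∀ {x}, x ∈ Z₀ → comp p l x ≤ d x ∧ comp p l lam < comp p l x := by
    intro x hx; rw [hZ₀, Finset.mem_filter, hE, Finset.mem_filter] at hx; exact ⟨hx.1.2, hx.2⟩
  have hXsX₀ : Xs ⊆ X₀ := Finset.filter_subset _ _
  have hYsY₀ : Ys ⊆ Y₀ := Finset.filter_subset _ _
  -- Jr is disjoint from X₀, Z₀ and Dm
  have hJrX₀ : ∀ {r}, r ∈ Jr → r ∉ X₀ := by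
    intro r hr hrX; exact absurd (hphimin r hr) (not_le.2 (memX₀ hrX).2)
  have hJrZ₀ : ∀ {r}, r ∈ Jr → r ∉ Z₀ := by
    intro r hr hrZ; exact absurd (hlammax r hr) (not_le.2 (memZ₀ hrZ).2)
  have hJrDm : ∀ {r}, r ∈ Jr → r ∉ Dm := by
    intro r hr hrD
    rw [hDm, Finset.mem_filter, Finset.mem_union, Finset.mem_sdiff] at hrD
    rcases hrD.1 with h | h
    · exact hJrX₀ hr h
    · exact h.2 hr
  have hJrZs : ∀ {r}, r ∈ Jr → r ∉ Zs := by
    intro r hr hrZ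
    rw [hZs, Finset.mem_union] at hrZ
    rcases hrZ with h | h
    · exact hJrZ₀ hr h
    · exact hJrDm hr h
  -- pairwise disjointness
  have dXY : Disjoint Xs Ys := by
    rw [Finset.disjoint_left]
    intro a ha hb
    have h1 := (memX₀ (hXsX₀ ha)).2
    have h2 := (memY₀ (hYsY₀ hb)).2.1
    omega
  have dXZ : Disjoint Xs Zs := by
    rw [Finset.disjoint_left]
    intro a ha hb
    have hallz : ∀ z ∈ Z₀, a < z := (Finset.mem_filter.1 ha).2
    rw [hZs, Finset.mem_union] at hb
    rcases hb with h | h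
    · exact absurd (hallz a h) (lt_irrefl a)
    · obtain ⟨z, hz, hza⟩ := (Finset.mem_filter.1 h).2
      exact absurd (lt_trans hza (hallz z hz)) (lt_irrefl z)
  have dYZ : Disjoint Ys Zs := by
    rw [Finset.disjoint_left]
    intro a ha hb
    have h2 := (memY₀ (hYsY₀ ha)).2.2
    rw [hZs, Finset.mem_union] at hb
    rcases hb with h | h
    · have := (memZ₀ h).2; omega
    · rw [hDm, Finset.mem_filter, Finset.mem_union, Finset.mem_sdiff] at h
      obtain ⟨hmem, z, hz, hza⟩ := h
      rcases hmem with h' | h'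
      · have := (memX₀ h').2
        have := (memY₀ (hYsY₀ ha)).2.1
        omega
      · rcases (Finset.mem_filter.1 ha).2 with hJ | hall
        · exact h'.2 hJ
        · exact absurd (lt_trans hza (hall z hz)) (lt_irrefl z)
  have dXZJr : Disjoint (Xs ∪ Zs) Jr := by
    rw [Finset.disjoint_left]
    intro a ha hr
    rcases Finset.mem_union.1 ha with h | h
    · exact hJrX₀ hr (hXsX₀ h)
    · exact hJrZs hr h
  -- the index-ordering property
  have horder : ∀ x ∈ Xs ∪ (Ys \ Jr), ∀ z ∈ Zs, x < z := by
    intro x hx z hz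
    have hallx : ∀ z' ∈ Z₀, x < z' := by
      rcases Finset.mem_union.1 hx with h | h
      · exact (Finset.mem_filter.1 h).2
      · rw [Finset.mem_sdiff] at h
        rcases (Finset.mem_filter.1 h.1).2 with hJ | hall
        · exact absurd hJ h.2
        · exact hall
    rw [hZs, Finset.mem_union] at hz
    rcases hz with h | h
    · exact hallx z h
    · obtain ⟨z₀, hz₀, hz₀z⟩ := (Finset.mem_filter.1 h).2
      exact lt_trans (hallx z₀ hz₀) hz₀z
  set Rest : Finset (Fin n) := Finset.univ \ (Xs ∪ Ys ∪ Jr ∪ Zs) with hRest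
  set σ : List (Fin n) := fiveBlockU Jr Xs Ys Zs with hσ
  have hσeq : σ = sortF Xs ++ (sortF Ys ++ (sortF (Jr \ Ys) ++ (sortF Zs ++ sortF Rest))) := by
    rw [hσ]; simp [fiveBlockU, List.append_assoc, hRest]
  have cX : ∀ j ∈ Xs, comp p σ j = (∑ i ∈ Xs.filter (· < j), p i) + p j := by
    intro j hj
    have h := comp_block p [] (sortF Ys ++ (sortF (Jr \ Ys) ++ (sortF Zs ++ sortF Rest)))
      Xs j hj (by simp)
    rw [hσeq]
    simpa using h
  have cY : ∀ j ∈ Ys,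
      comp p σ j = (∑ i ∈ Xs, p i) + (∑ i ∈ Ys.filter (· < j), p i) + p j := by
    intro j hj
    have hjX : j ∉ sortF Xs := fun h => (Finset.disjoint_left.1 dXY) (mem_sortF.1 h) hj
    have h := comp_block p (sortF Xs) (sortF (Jr \ Ys) ++ (sortF Zs ++ sortF Rest))
      Ys j hj (by simpa using hjX)
    rw [hσeq, h, sortF_sum]
  have hσeq2 : σ = (sortF Xs ++ sortF Ys) ++
      (sortF (Jr \ Ys) ++ (sortF Zs ++ sortF Rest)) := by
    rw [hσeq]; simp [List.append_assoc]
  have cR : ∀ j ∈ Jr \ Ys,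
      comp p σ j = (∑ i ∈ Xs, p i) + (∑ i ∈ Ys, p i)
        + (∑ i ∈ (Jr \ Ys).filter (· < j), p i) + p j := by
    intro j hj
    have hjJr : j ∈ Jr := (Finset.mem_sdiff.1 hj).1
    have hjYs : j ∉ Ys := (Finset.mem_sdiff.1 hj).2
    have hjXs : j ∉ Xs := fun h => (Finset.disjoint_left.1 dXZJr) (Finset.mem_union_left _ h) hjJr
    have hjL : j ∉ sortF Xs ++ sortF Ys := by
      simp only [List.mem_append, mem_sortF, not_or]; exact ⟨hjXs, hjYs⟩
    have h := comp_block p (sortF Xs ++ sortF Ys) (sortF Zs ++ sortF Rest)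
      (Jr \ Ys) j hj hjL
    rw [hσeq2, h, List.map_append, List.sum_append, sortF_sum, sortF_sum]
  have hσeq3 : σ = ((sortF Xs ++ sortF Ys) ++ sortF (Jr \ Ys)) ++
      (sortF Zs ++ sortF Rest) := by
    rw [hσeq]; simp [List.append_assoc]
  have cZ : ∀ j ∈ Zs,
      comp p σ j = (∑ i ∈ Xs, p i) + (∑ i ∈ Ys, p i) + (∑ i ∈ Jr \ Ys, p i)
        + (∑ i ∈ Zs.filter (· < j), p i) + p j := by
    intro j hj
    have hjJr : j ∉ Jr := fun h => hJrZs h hj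
    have hjXs : j ∉ Xs := fun h => (Finset.disjoint_left.1 dXZ) h hj
    have hjYs : j ∉ Ys := fun h => (Finset.disjoint_left.1 dYZ) h hj
    have hjL : j ∉ (sortF Xs ++ sortF Ys) ++ sortF (Jr \ Ys) := by
      simp only [List.mem_append, mem_sortF, not_or, Finset.mem_sdiff]
      exact ⟨⟨hjXs, hjYs⟩, fun h => hjJr h.1⟩
    have h := comp_block p ((sortF Xs ++ sortF Ys) ++ sortF (Jr \ Ys)) (sortF Rest)
      Zs j hj hjL
    rw [hσeq3, h, List.map_append, List.sum_append, List.map_append, List.sum_append,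
      sortF_sum, sortF_sum, sortF_sum]
  have hearly : ∀ j ∈ Xs ∪ Ys ∪ Zs, comp p σ j ≤ d j := by
    intro j hj
    rcases Finset.mem_union.1 hj with hj' | hjZ
    · rcases Finset.mem_union.1 hj' with hjX | hjY
      · -- j ∈ Xs
        set T := insert j (Xs.filter (· < j)) with hT
        have hTX : T ⊆ Xs := by
          intro i hi
          rcases Finset.mem_insert.1 hi with rfl | hi
          · exact hjX
          · exact Finset.filter_subset _ _ hi
        obtain ⟨j', hj'T, hj'max⟩ := T.exists_max_image (comp p l)
          ⟨j, Finset.mem_insert_self _ _⟩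
        have hsum : comp p σ j = ∑ i ∈ T, p i := by
          rw [cX j hjX, hT, Finset.sum_insert (by simp)]
          omega
        have hle : ∑ i ∈ T, p i ≤ comp p l j' :=
          sum_le_comp p hp hlnd T (fun i _ => hlmem i) hj'T hj'max
        have hj'le : j' ≤ j := by
          rcases Finset.mem_insert.1 hj'T with rfl | h
          · exact le_refl _
          · exact le_of_lt (Finset.mem_filter.1 h).2
        calc comp p σ j = ∑ i ∈ T, p i := hsum
          _ ≤ comp p l j' := hle
          _ ≤ d j' := (memX₀ (hXsX₀ (hTX hj'T))).1
          _ ≤ d j := hd hj'le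
      · -- j ∈ Ys
        set T₂ := insert j (Ys.filter (· < j)) with hT₂
        have hT₂Y : T₂ ⊆ Ys := by
          intro i hi
          rcases Finset.mem_insert.1 hi with rfl | hi
          · exact hjY
          · exact Finset.filter_subset _ _ hi
        have hdisj : Disjoint Xs T₂ := Finset.disjoint_of_subset_right hT₂Y dXY
        obtain ⟨j', hj'T, hj'max⟩ := T₂.exists_max_image (comp p l)
          ⟨j, Finset.mem_insert_self _ _⟩
        have hsum : comp p σ j = ∑ i ∈ Xs ∪ T₂, p i := by
          rw [cY j hjY, Finset.sum_union hdisj, hT₂, Finset.sum_insert (by simp)]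
          omega
        have hmax : ∀ i ∈ Xs ∪ T₂, comp p l i ≤ comp p l j' := by
          intro i hi
          rcases Finset.mem_union.1 hi with h | h
          · have h1 := (memX₀ (hXsX₀ h)).2
            have h2 := (memY₀ (hYsY₀ (hT₂Y hj'T))).2.1
            omega
          · exact hj'max i h
        have hle : ∑ i ∈ Xs ∪ T₂, p i ≤ comp p l j' :=
          sum_le_comp p hp hlnd _ (fun i _ => hlmem i) (Finset.mem_union_right _ hj'T) hmax
        have hj'le : j' ≤ j := by
          rcases Finset.mem_insert.1 hj'T with rfl | h
          · exact le_refl _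
          · exact le_of_lt (Finset.mem_filter.1 h).2
        calc comp p σ j = ∑ i ∈ Xs ∪ T₂, p i := hsum
          _ ≤ comp p l j' := hle
          _ ≤ d j' := (memY₀ (hYsY₀ (hT₂Y hj'T))).1
          _ ≤ d j := hd hj'le
    · -- j ∈ Zs
      set T₄ := insert j (Zs.filter (· < j)) with hT₄
      have hT₄Z : T₄ ⊆ Zs := by
        intro i hi
        rcases Finset.mem_insert.1 hi with rfl | hi
        · exact hjZ
        · exact Finset.filter_subset _ _ hi
      have d2 : Disjoint (Xs ∪ Ys) (Jr \ Ys) := by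
        rw [Finset.disjoint_left]
        intro a ha hb
        rw [Finset.mem_sdiff] at hb
        rcases Finset.mem_union.1 ha with h | h
        · exact (Finset.disjoint_left.1 dXZJr) (Finset.mem_union_left _ h) hb.1
        · exact hb.2 h
      have d3 : Disjoint ((Xs ∪ Ys) ∪ (Jr \ Ys)) T₄ := by
        rw [Finset.disjoint_left]
        intro a ha hb
        have hbZ := hT₄Z hb
        rcases Finset.mem_union.1 ha with h | h
        · rcases Finset.mem_union.1 h with h' | h'
          · exact (Finset.disjoint_left.1 dXZ) h' hbZ
          · exact (Finset.disjoint_left.1 dYZ) h' hbZ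
        · exact hJrZs (Finset.mem_sdiff.1 h).1 hbZ
      have hsum : comp p σ j = ∑ i ∈ ((Xs ∪ Ys) ∪ (Jr \ Ys)) ∪ T₄, p i := by
        rw [cZ j hjZ, Finset.sum_union d3, Finset.sum_union d2, Finset.sum_union dXY,
          hT₄, Finset.sum_insert (by simp)]
        omega
      have hW : (Z₀.filter (· ≤ j)).Nonempty := by
        rw [hZs, Finset.mem_union] at hjZ
        rcases hjZ with h | h
        · exact ⟨j, Finset.mem_filter.2 ⟨h, le_refl _⟩⟩
        · obtain ⟨z, hz, hzj⟩ := (Finset.mem_filter.1 h).2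
          exact ⟨z, Finset.mem_filter.2 ⟨hz, le_of_lt hzj⟩⟩
      obtain ⟨j', hj'W, hj'max⟩ := (Z₀.filter (· ≤ j)).exists_max_image (comp p l) hW
      have hj'Z₀ : j' ∈ Z₀ := (Finset.mem_filter.1 hj'W).1
      have hj'le : j' ≤ j := (Finset.mem_filter.1 hj'W).2
      have hj'T : j' ∈ ((Xs ∪ Ys) ∪ (Jr \ Ys)) ∪ T₄ := by
        refine Finset.mem_union_right _ ?_
        rcases eq_or_lt_of_le hj'le with rfl | hlt
        · exact Finset.mem_insert_self _ _
        · exact Finset.mem_insert_of_mem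
            (Finset.mem_filter.2 ⟨Finset.mem_union_left _ hj'Z₀, hlt⟩)
      have hmax : ∀ i ∈ ((Xs ∪ Ys) ∪ (Jr \ Ys)) ∪ T₄, comp p l i ≤ comp p l j' := by
        have hcj' := (memZ₀ hj'Z₀).2
        intro i hi
        rcases Finset.mem_union.1 hi with h | h
        · rcases Finset.mem_union.1 h with h' | h'
          · rcases Finset.mem_union.1 h' with h'' | h''
            · have := (memX₀ (hXsX₀ h'')).2; omega
            · have := (memY₀ (hYsY₀ h'')).2.2; omega
          · have := hlammax i (Finset.mem_sdiff.1 h').1; omega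
        · -- i ∈ T₄
          have hiZs := hT₄Z h
          have hile : i ≤ j := by
            rcases Finset.mem_insert.1 h with rfl | h'
            · exact le_refl _
            · exact le_of_lt (Finset.mem_filter.1 h').2
          rw [hZs, Finset.mem_union] at hiZs
          rcases hiZs with h' | h'
          · exact hj'max i (Finset.mem_filter.2 ⟨h', hile⟩)
          · rw [hDm, Finset.mem_filter, Finset.mem_union, Finset.mem_sdiff] at h'
            rcases h'.1 with h'' | h''
            · have := (memX₀ h'').2; omega
            · have := (memY₀ h''.1).2.2; omega
      have hle : ∑ i ∈ ((Xs ∪ Ys) ∪ (Jr \ Ys)) ∪ T₄, p i ≤ comp p l j' :=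
        sum_le_comp p hp hlnd _ (fun i _ => hlmem i) hj'T hmax
      calc comp p σ j = ∑ i ∈ ((Xs ∪ Ys) ∪ (Jr \ Ys)) ∪ T₄, p i := hsum
        _ ≤ comp p l j' := hle
        _ ≤ d j' := (memZ₀ hj'Z₀).1
        _ ≤ d j := hd hj'le
  -- rent bound for σ
  have hub : ∀ r ∈ Jr, comp p σ r ≤
      (∑ i ∈ Xs, p i) + (∑ i ∈ Ys, p i) + (∑ i ∈ Jr \ Ys, p i) := by
    intro r hr
    by_cases hrY : r ∈ Ys
    · rw [cY r hrY]
      have hins : insert r (Ys.filter (· < r)) ⊆ Ys := by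
        intro i hi
        rcases Finset.mem_insert.1 hi with rfl | hi
        · exact hrY
        · exact Finset.filter_subset _ _ hi
      have h1 : (∑ i ∈ Ys.filter (· < r), p i) + p r ≤ ∑ i ∈ Ys, p i := by
        have := Finset.sum_le_sum_of_subset (f := p) hins
        rw [Finset.sum_insert (by simp)] at this
        omega
      omega
    · have hrR : r ∈ Jr \ Ys := Finset.mem_sdiff.2 ⟨hr, hrY⟩
      rw [cR r hrR]
      have hins : insert r ((Jr \ Ys).filter (· < r)) ⊆ Jr \ Ys := by
        intro i hi
        rcases Finset.mem_insert.1 hi with rfl | hi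
        · exact hrR
        · exact Finset.filter_subset _ _ hi
      have h1 : (∑ i ∈ (Jr \ Ys).filter (· < r), p i) + p r ≤ ∑ i ∈ Jr \ Ys, p i := by
        have := Finset.sum_le_sum_of_subset (f := p) hins
        rw [Finset.sum_insert (by simp)] at this
        omega
      omega
  have hlbσ : ∀ r ∈ Jr, (∑ i ∈ Xs, p i) + p r ≤ comp p σ r := by
    intro r hr
    by_cases hrY : r ∈ Ys
    · rw [cY r hrY]; omega
    · rw [cR r (Finset.mem_sdiff.2 ⟨hr, hrY⟩)]; omega
  have hrentσ : rent p Jr hJr σ ≤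
      ((∑ i ∈ Ys, p i : ℕ) : ℤ) + ((∑ i ∈ Jr \ Ys, p i : ℕ) : ℤ) := by
    have h1 : Jr.sup' hJr (fun j => (comp p σ j : ℤ)) ≤
        (((∑ i ∈ Xs, p i) + (∑ i ∈ Ys, p i) + (∑ i ∈ Jr \ Ys, p i) : ℕ) : ℤ) :=
      Finset.sup'_le hJr _ (fun r hr => by exact_mod_cast hub r hr)
    have h2 : ((∑ i ∈ Xs, p i : ℕ) : ℤ) ≤
        Jr.inf' hJr (fun j => (comp p σ j : ℤ) - p j) := by
      refine Finset.le_inf' hJr _ (fun r hr => ?_)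
      have := hlbσ r hr
      have : ((∑ i ∈ Xs, p i : ℕ) : ℤ) + p r ≤ (comp p σ r : ℤ) := by exact_mod_cast this
      omega
    show Jr.sup' hJr (fun j => (comp p σ j : ℤ)) -
        Jr.inf' hJr (fun j => (comp p σ j : ℤ) - p j) ≤ _
    push_cast at h1 h2 ⊢
    omega
  have hseg : (∑ i ∈ Y₀ ∪ Jr, p i) + comp p l phi ≤ comp p l lam + p phi := by
    refine sum_le_comp_sub p hp hlnd (Y₀ ∪ Jr) (fun i _ => hlmem i) (hlmem phi)
      (Finset.mem_union_right _ hlamJ) ?_ ?_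
    · intro i hi
      rcases Finset.mem_union.1 hi with h | h
      · exact (memY₀ h).2.2
      · exact hlammax i h
    · intro i hi
      rcases Finset.mem_union.1 hi with h | h
      · exact (memY₀ h).2.1
      · exact hphimin i h
  have hrentl : (comp p l lam : ℤ) - ((comp p l phi : ℤ) - p phi) ≤ rent p Jr hJr l := by
    have h1 : (comp p l lam : ℤ) ≤ Jr.sup' hJr (fun j => (comp p l j : ℤ)) :=
      Finset.le_sup' (f := fun j => (comp p l j : ℤ)) hlamJ
    have h2 : Jr.inf' hJr (fun j => (comp p l j : ℤ) - p j) ≤ (comp p l phi : ℤ) - p phi :=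
      Finset.inf'_le (f := fun j => (comp p l j : ℤ) - p j) hphiJ
    show _ ≤ Jr.sup' hJr (fun j => (comp p l j : ℤ)) -
        Jr.inf' hJr (fun j => (comp p l j : ℤ) - p j)
    omega
  have hYsYJ : (∑ i ∈ Ys, p i) + (∑ i ∈ Jr \ Ys, p i) ≤ ∑ i ∈ Y₀ ∪ Jr, p i := by
    have hd' : Disjoint Ys (Jr \ Ys) := Finset.disjoint_sdiff
    have e : Ys ∪ (Jr \ Ys) = Ys ∪ Jr := by
      ext i
      simp only [Finset.mem_union, Finset.mem_sdiff]
      tauto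
    rw [← Finset.sum_union hd', e]
    exact Finset.sum_le_sum_of_subset (Finset.union_subset_union_left hYsY₀)
  have hrentKr : rent p Jr hJr σ ≤ Kr := by
    calc rent p Jr hJr σ
        ≤ ((∑ i ∈ Ys, p i : ℕ) : ℤ) + ((∑ i ∈ Jr \ Ys, p i : ℕ) : ℤ) := hrentσ
      _ ≤ ((∑ i ∈ Y₀ ∪ Jr, p i : ℕ) : ℤ) := by exact_mod_cast hYsYJ
      _ ≤ (comp p l lam : ℤ) - ((comp p l phi : ℤ) - p phi) := by
          have : ((∑ i ∈ Y₀ ∪ Jr, p i : ℕ) : ℤ) + comp p l phi ≤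
              (comp p l lam : ℤ) + p phi := by exact_mod_cast hseg
          omega
      _ ≤ rent p Jr hJr l := hrentl
      _ ≤ Kr := hlrent
  -- every early job of l belongs to Xs ∪ Ys ∪ Zs
  have hEsub : E ⊆ Xs ∪ Ys ∪ Zs := by
    intro j hjE
    rcases lt_or_ge (comp p l j) (comp p l phi) with h | h
    · have hjX₀ : j ∈ X₀ := Finset.mem_filter.2 ⟨hjE, h⟩
      by_cases hall : ∀ z ∈ Z₀, j < z
      · exact Finset.mem_union_left _
          (Finset.mem_union_left _ (Finset.mem_filter.2 ⟨hjX₀, hall⟩))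
      · push_neg at hall
        obtain ⟨z, hz, hzj⟩ := hall
        have hne : z ≠ j := by
          rintro rfl
          have h1 := (memZ₀ hz).2
          omega
        have hzlt : z < j := lt_of_le_of_ne hzj hne
        refine Finset.mem_union_right _ (Finset.mem_union_right _ ?_)
        exact Finset.mem_filter.2 ⟨Finset.mem_union_left _ hjX₀, ⟨z, hz, hzlt⟩⟩
    · rcases le_or_gt (comp p l j) (comp p l lam) with h2 | h2
      · have hjY₀ : j ∈ Y₀ := Finset.mem_filter.2 ⟨hjE, h, h2⟩
        by_cases hJ : j ∈ Jr
        · exact Finset.mem_union_left _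
            (Finset.mem_union_right _ (Finset.mem_filter.2 ⟨hjY₀, Or.inl hJ⟩))
        by_cases hall : ∀ z ∈ Z₀, j < z
        · exact Finset.mem_union_left _
            (Finset.mem_union_right _ (Finset.mem_filter.2 ⟨hjY₀, Or.inr hall⟩))
        · push_neg at hall
          obtain ⟨z, hz, hzj⟩ := hall
          have hne : z ≠ j := by
            rintro rfl
            have h1 := (memZ₀ hz).2
            omega
          have hzlt : z < j := lt_of_le_of_ne hzj hne
          refine Finset.mem_union_right _ (Finset.mem_union_right _ ?_)
          exact Finset.mem_filter.2
            ⟨Finset.mem_union_right _ (Finset.mem_sdiff.2 ⟨hjY₀, hJ⟩), ⟨z, hz, hzlt⟩⟩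
      · exact Finset.mem_union_right _
          (Finset.mem_union_left _ (Finset.mem_filter.2 ⟨hjE, h2⟩))
  have hWl : WNT p w d σ ≤ WNT p w d l := by
    unfold WNT
    refine Finset.sum_le_sum (fun j _ => ?_)
    by_cases hj : j ∈ Xs ∪ Ys ∪ Zs
    · have h0 : ¬ d j < comp p σ j := not_lt.2 (hearly j hj)
      simp [h0]
    · have hjE : j ∉ E := fun h => hj (hEsub h)
      have hjd : d j < comp p l j := by
        rw [hE, Finset.mem_filter] at hjE
        push_neg at hjE
        exact hjE (Finset.mem_univ j)
      have h1 : (if d j < comp p σ j then 1 else 0) ≤ 1 := by split <;> simp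
      simp only [if_pos hjd]
      exact Nat.mul_le_mul_left _ h1
  refine ⟨Xs, Ys, Zs, dXY, dXZ, dYZ, dXZJr, horder, hrentKr, hearly, ?_⟩
  intro l' hs' hr'
  refine le_trans hWl (hopt l' ?_)
  rw [hL, List.mem_filter]
  exact ⟨List.mem_permutations.2 hs', by simpa using hr'⟩
end

section
/- Monotonicity of X_λ and Y_λ: with jobs in WSPT order, if j ∈ X_λ then every o-job j' with α ≤ j' ≤ j is also in X_λ; symmetrically, if j ∈ Y_λ then every o-job j' with j ≤ j' ≤ β is in Y_λ. -/
variable {n : ℕ}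

/-- `A_j = J^r ∩ [α, j]`. -/
def Aset (Jr : Finset (Fin n)) (hJr : Jr.Nonempty) (j : Fin n) : Finset (Fin n) :=
  Jr ∩ Finset.Icc (Jr.min' hJr) j

/-- `B_j = J^r ∩ [j, β]`. -/
def Bset (Jr : Finset (Fin n)) (hJr : Jr.Nonempty) (j : Fin n) : Finset (Fin n) :=
  Jr ∩ Finset.Icc j (Jr.max' hJr)

/-- `w(S)/p(S)` as a rational. -/
def ratio (w p : Fin n → ℕ) (S : Finset (Fin n)) : ℚ :=
  (∑ i ∈ S, (w i : ℚ)) / (∑ i ∈ S, (p i : ℚ))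

/-- membership in `X_λ`. -/
def XlamMem (p w : Fin n → ℕ) (Jr : Finset (Fin n)) (hJr : Jr.Nonempty)
    (lam : ℚ) (j : Fin n) : Prop :=
  j ∈ Hset Jr hJr ∧
    (w j : ℚ) / (p j : ℚ) >
      ((∑ i ∈ Aset Jr hJr j, (w i : ℚ)) - lam) / (∑ i ∈ Aset Jr hJr j, (p i : ℚ)) ∧
    (w j : ℚ) / (p j : ℚ) ≥ ratio w p Jr

/-- membership in `Y_λ`. -/
def YlamMem (p w : Fin n → ℕ) (Jr : Finset (Fin n)) (hJr : Jr.Nonempty)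
    (lam : ℚ) (j : Fin n) : Prop :=
  j ∈ Hset Jr hJr ∧
    (w j : ℚ) / (p j : ℚ) <
      ((∑ i ∈ Bset Jr hJr j, (w i : ℚ)) + lam) / (∑ i ∈ Bset Jr hJr j, (p i : ℚ)) ∧
    (w j : ℚ) / (p j : ℚ) < ratio w p Jr

/-- monotonicity of `X_λ` and `Y_λ` (jobs in WSPT order): if
`j ∈ X_λ` then every o-job `j'` with `α ≤ j' ≤ j` is in `X_λ`; if `j ∈ Y_λ`
then every o-job `j'` with `j ≤ j' ≤ β` is in `Y_λ`. -/
theorem stmt15 {n : ℕ} (p w : Fin n → ℕ) (hp : ∀ j, 0 < p j)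
    (hwspt : ∀ i j : Fin n, i ≤ j → w j * p i ≤ w i * p j)
    (Jr : Finset (Fin n)) (hJr : Jr.Nonempty) (lam : ℚ) (hlam : 0 ≤ lam) :
    (∀ j, XlamMem p w Jr hJr lam j →
      ∀ j', j' ∉ Jr → Jr.min' hJr ≤ j' → j' ≤ j → XlamMem p w Jr hJr lam j') ∧
    (∀ j, YlamMem p w Jr hJr lam j →
      ∀ j', j' ∉ Jr → j ≤ j' → j' ≤ Jr.max' hJr → YlamMem p w Jr hJr lam j') := by
  have hpq : ∀ j : Fin n, (0:ℚ) < (p j : ℚ) := fun j => by exact_mod_cast hp j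
  have hr : ∀ i j : Fin n, i ≤ j → (w j : ℚ) / (p j : ℚ) ≤ (w i : ℚ) / (p i : ℚ) := by
    intro i j hij
    rw [div_le_div_iff₀ (hpq j) (hpq i)]
    exact_mod_cast hwspt i j hij
  have hsumpos : ∀ S : Finset (Fin n), S.Nonempty → (0:ℚ) < ∑ i ∈ S, (p i : ℚ) := by
    intro S hS
    exact Finset.sum_pos (fun i _ => hpq i) hS
  constructor
  · intro j hj j' hj'Jr hαj' hj'j
    obtain ⟨hjH, hjA, hjR⟩ := hj
    rw [Hset, Finset.mem_sdiff, Finset.mem_Icc] at hjH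
    obtain ⟨⟨hαj, hjβ⟩, _⟩ := hjH
    have hrle := hr j' j hj'j
    refine ⟨?_, ?_, le_trans hjR hrle⟩
    · rw [Hset, Finset.mem_sdiff, Finset.mem_Icc]
      exact ⟨⟨hαj', le_trans hj'j hjβ⟩, hj'Jr⟩
    · -- split Aset j
      set r : ℚ := (w j : ℚ) / (p j : ℚ) with hrdef
      have hdisj : Disjoint (Aset Jr hJr j') (Jr ∩ Finset.Ioc j' j) := by
        rw [Finset.disjoint_left]
        intro a ha hb
        rw [Aset, Finset.mem_inter, Finset.mem_Icc] at ha
        rw [Finset.mem_inter, Finset.mem_Ioc] at hb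
        exact absurd ha.2.2 (not_le.mpr hb.2.1)
      have hsplit : Aset Jr hJr j = Aset Jr hJr j' ∪ (Jr ∩ Finset.Ioc j' j) := by
        have : Finset.Icc (Jr.min' hJr) j' ∪ Finset.Ioc j' j = Finset.Icc (Jr.min' hJr) j := by
          rw [← Finset.coe_inj, Finset.coe_union, Finset.coe_Icc, Finset.coe_Ioc, Finset.coe_Icc]
          exact Set.Icc_union_Ioc_eq_Icc hαj' hj'j
        rw [Aset, Aset, ← Finset.inter_union_distrib_left, this]
      have hne : (Aset Jr hJr j').Nonempty := by
        refine ⟨Jr.min' hJr, ?_⟩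
        rw [Aset, Finset.mem_inter, Finset.mem_Icc]
        exact ⟨Jr.min'_mem hJr, le_refl _, hαj'⟩
      have hPS := hsumpos _ hne
      have hneA : (Aset Jr hJr j).Nonempty := by
        refine ⟨Jr.min' hJr, ?_⟩
        rw [Aset, Finset.mem_inter, Finset.mem_Icc]
        exact ⟨Jr.min'_mem hJr, le_refl _, le_trans hαj' hj'j⟩
      have hPA := hsumpos _ hneA
      have hjA' : (∑ i ∈ Aset Jr hJr j, (w i : ℚ)) - lam < r * ∑ i ∈ Aset Jr hJr j, (p i : ℚ) :=
        (div_lt_iff₀ hPA).mp hjA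
      have hT : r * (∑ i ∈ Jr ∩ Finset.Ioc j' j, (p i : ℚ)) ≤
          ∑ i ∈ Jr ∩ Finset.Ioc j' j, (w i : ℚ) := by
        rw [Finset.mul_sum]
        refine Finset.sum_le_sum ?_
        intro i hi
        rw [Finset.mem_inter, Finset.mem_Ioc] at hi
        have := hr i j hi.2.2
        calc r * (p i : ℚ) ≤ ((w i : ℚ) / (p i : ℚ)) * (p i : ℚ) :=
              mul_le_mul_of_nonneg_right this (le_of_lt (hpq i))
          _ = (w i : ℚ) := div_mul_cancel₀ _ (ne_of_gt (hpq i))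
      have key : (∑ i ∈ Aset Jr hJr j', (w i : ℚ)) - lam <
          r * ∑ i ∈ Aset Jr hJr j', (p i : ℚ) := by
        have hsw : (∑ i ∈ Aset Jr hJr j, (w i : ℚ)) =
            (∑ i ∈ Aset Jr hJr j', (w i : ℚ)) + ∑ i ∈ Jr ∩ Finset.Ioc j' j, (w i : ℚ) := by
          rw [hsplit, Finset.sum_union hdisj]
        have hsp : (∑ i ∈ Aset Jr hJr j, (p i : ℚ)) =
            (∑ i ∈ Aset Jr hJr j', (p i : ℚ)) + ∑ i ∈ Jr ∩ Finset.Ioc j' j, (p i : ℚ) := by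
          rw [hsplit, Finset.sum_union hdisj]
        rw [hsw, hsp] at hjA'
        rw [mul_add] at hjA'
        linarith
      calc ((∑ i ∈ Aset Jr hJr j', (w i : ℚ)) - lam) / (∑ i ∈ Aset Jr hJr j', (p i : ℚ))
          < r := (div_lt_iff₀ hPS).mpr key
        _ ≤ (w j' : ℚ) / (p j' : ℚ) := hrle
  · intro j hj j' hj'Jr hjj' hj'β
    obtain ⟨hjH, hjB, hjR⟩ := hj
    rw [Hset, Finset.mem_sdiff, Finset.mem_Icc] at hjH
    obtain ⟨⟨hαj, hjβ⟩, _⟩ := hjH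
    have hrle := hr j j' hjj'
    refine ⟨?_, ?_, lt_of_le_of_lt hrle hjR⟩
    · rw [Hset, Finset.mem_sdiff, Finset.mem_Icc]
      exact ⟨⟨le_trans hαj hjj', hj'β⟩, hj'Jr⟩
    · set r : ℚ := (w j : ℚ) / (p j : ℚ) with hrdef
      have hdisj : Disjoint (Jr ∩ Finset.Ico j j') (Bset Jr hJr j') := by
        rw [Finset.disjoint_left]
        intro a ha hb
        rw [Finset.mem_inter, Finset.mem_Ico] at ha
        rw [Bset, Finset.mem_inter, Finset.mem_Icc] at hb
        exact absurd hb.2.1 (not_le.mpr ha.2.2)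
      have hsplit : Bset Jr hJr j = (Jr ∩ Finset.Ico j j') ∪ Bset Jr hJr j' := by
        have : Finset.Ico j j' ∪ Finset.Icc j' (Jr.max' hJr) = Finset.Icc j (Jr.max' hJr) := by
          rw [← Finset.coe_inj, Finset.coe_union, Finset.coe_Ico, Finset.coe_Icc, Finset.coe_Icc]
          exact Set.Ico_union_Icc_eq_Icc hjj' hj'β
        rw [Bset, Bset, ← Finset.inter_union_distrib_left, this]
      have hne : (Bset Jr hJr j').Nonempty := by
        refine ⟨Jr.max' hJr, ?_⟩
        rw [Bset, Finset.mem_inter, Finset.mem_Icc]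
        exact ⟨Jr.max'_mem hJr, hj'β, le_refl _⟩
      have hPS := hsumpos _ hne
      have hneB : (Bset Jr hJr j).Nonempty := by
        refine ⟨Jr.max' hJr, ?_⟩
        rw [Bset, Finset.mem_inter, Finset.mem_Icc]
        exact ⟨Jr.max'_mem hJr, le_trans hjj' hj'β, le_refl _⟩
      have hPB := hsumpos _ hneB
      have hjB' : r * (∑ i ∈ Bset Jr hJr j, (p i : ℚ)) <
          (∑ i ∈ Bset Jr hJr j, (w i : ℚ)) + lam :=
        (lt_div_iff₀ hPB).mp hjB
      have hT : (∑ i ∈ Jr ∩ Finset.Ico j j', (w i : ℚ)) ≤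
          r * ∑ i ∈ Jr ∩ Finset.Ico j j', (p i : ℚ) := by
        rw [Finset.mul_sum]
        refine Finset.sum_le_sum ?_
        intro i hi
        rw [Finset.mem_inter, Finset.mem_Ico] at hi
        have := hr j i hi.2.1
        calc (w i : ℚ) = ((w i : ℚ) / (p i : ℚ)) * (p i : ℚ) :=
              (div_mul_cancel₀ _ (ne_of_gt (hpq i))).symm
          _ ≤ r * (p i : ℚ) := mul_le_mul_of_nonneg_right this (le_of_lt (hpq i))
      have key : r * (∑ i ∈ Bset Jr hJr j', (p i : ℚ)) <
          (∑ i ∈ Bset Jr hJr j', (w i : ℚ)) + lam := by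
        have hsw : (∑ i ∈ Bset Jr hJr j, (w i : ℚ)) =
            (∑ i ∈ Jr ∩ Finset.Ico j j', (w i : ℚ)) + ∑ i ∈ Bset Jr hJr j', (w i : ℚ) := by
          rw [hsplit, Finset.sum_union hdisj]
        have hsp : (∑ i ∈ Bset Jr hJr j, (p i : ℚ)) =
            (∑ i ∈ Jr ∩ Finset.Ico j j', (p i : ℚ)) + ∑ i ∈ Bset Jr hJr j', (p i : ℚ) := by
          rw [hsplit, Finset.sum_union hdisj]
        rw [hsw, hsp] at hjB'
        rw [mul_add] at hjB'
        linarith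
      calc (w j' : ℚ) / (p j' : ℚ) ≤ r := hrle
        _ < ((∑ i ∈ Bset Jr hJr j', (w i : ℚ)) + lam) / (∑ i ∈ Bset Jr hJr j', (p i : ℚ)) :=
          (lt_div_iff₀ hPS).mpr key
end
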